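/- Let α = (3/5, 4/5; −4/5, 3/5) acting on (ℤ[1/5])² as a group automorphism. Then the semidirect product Λ = (ℤ[1/5])² ⋊_α ℤ is finitely generated; in fact it is generated by the generator of the ℤ-factor together with the two standard basis vectors (1,0) and (0,1) of (ℤ[1/5])². -/
import Mathlib


/-- The standard copy of `(ℤ[1/5])²` inside `ℚ × ℚ`. -/
def Z5sq : AddSubgroup (ℚ × ℚ) where
  carrier := {p | ∃ (a b : ℤ) (n : ℕ), p.1 = (a : ℚ) / 5 ^ n ∧ p.2 = (b : ℚ) / 5 ^ n}
  zero_mem' := ⟨0, 0, 0, by norm_num, by norm_num⟩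
  add_mem' := by
    rintro p q ⟨a, b, n, h1, h2⟩ ⟨c, d, m, h3, h4⟩
    refine ⟨a * 5 ^ m + c * 5 ^ n, b * 5 ^ m + d * 5 ^ n, n + m, ?_, ?_⟩ <;>
      · simp only [Prod.fst_add, Prod.snd_add, h1, h2, h3, h4]
        push_cast
        rw [pow_add]
        field_simp
  neg_mem' := by
    rintro p ⟨a, b, n, h1, h2⟩
    exact ⟨-a, -b, n, by simp [h1, neg_div], by simp [h2, neg_div]⟩

/-- `(1, 0)` belongs to `(ℤ[1/5])²`. -/
theorem one_zero_mem : ((1 : ℚ), (0 : ℚ)) ∈ Z5sq := ⟨1, 0, 0, by norm_num, by norm_num⟩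

/-- `(0, 1)` belongs to `(ℤ[1/5])²`. -/
theorem zero_one_mem : ((0 : ℚ), (1 : ℚ)) ∈ Z5sq := ⟨0, 1, 0, by norm_num, by norm_num⟩

/-- Let `α = (3/5, 4/5; −4/5, 3/5)` act on `(ℤ[1/5])²`, and let
`Λ = (ℤ[1/5])² ⋊_α ℤ` be the corresponding semidirect product (here `φ` is the action of
`ℤ` on `(ℤ[1/5])²` whose generator acts by `α`).  Then `Λ` is finitely generated; in fact
it is generated by the generator `t` of the `ℤ`-factor together with the standard basis
vectors `(1,0)` and `(0,1)` of `(ℤ[1/5])²`. -/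
theorem stmt3
    (φ : Multiplicative ℤ →* MulAut (Multiplicative Z5sq))
    (hφ : ∀ v : Z5sq,
      ((Multiplicative.toAdd (φ (Multiplicative.ofAdd (1 : ℤ)) (Multiplicative.ofAdd v))
        : Z5sq) : ℚ × ℚ) =
      (3/5 * (v : ℚ × ℚ).1 + 4/5 * (v : ℚ × ℚ).2,
        -(4/5) * (v : ℚ × ℚ).1 + 3/5 * (v : ℚ × ℚ).2)) :
    Group.FG (Multiplicative Z5sq ⋊[φ] Multiplicative ℤ) ∧
    Subgroup.closure
      {SemidirectProduct.inr (Multiplicative.ofAdd (1 : ℤ)),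
        SemidirectProduct.inl (Multiplicative.ofAdd (⟨((1 : ℚ), (0 : ℚ)), one_zero_mem⟩ : Z5sq)),
        SemidirectProduct.inl (Multiplicative.ofAdd (⟨((0 : ℚ), (1 : ℚ)), zero_one_mem⟩ : Z5sq))} =
      (⊤ : Subgroup (Multiplicative Z5sq ⋊[φ] Multiplicative ℤ)) := by

  classical
  set t : Multiplicative ℤ := Multiplicative.ofAdd (1 : ℤ) with ht_def
  set e1 : Z5sq := (⟨((1 : ℚ), (0 : ℚ)), one_zero_mem⟩ : Z5sq) with he1_def
  set e2 : Z5sq := (⟨((0 : ℚ), (1 : ℚ)), zero_one_mem⟩ : Z5sq) with he2_def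
  set H : Subgroup (Multiplicative Z5sq ⋊[φ] Multiplicative ℤ) :=
    Subgroup.closure
      {SemidirectProduct.inr t, SemidirectProduct.inl (Multiplicative.ofAdd e1),
        SemidirectProduct.inl (Multiplicative.ofAdd e2)} with hH_def
  have ht : SemidirectProduct.inr t ∈ H := Subgroup.subset_closure (by left; rfl)
  have he1 : SemidirectProduct.inl (Multiplicative.ofAdd e1) ∈ H :=
    Subgroup.subset_closure (by right; left; rfl)
  have he2 : SemidirectProduct.inl (Multiplicative.ofAdd e2) ∈ H :=
    Subgroup.subset_closure (by right; right; rfl)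
  -- the additive subgroup of `Z5sq` of elements whose `inl` lies in `H`
  set K : AddSubgroup Z5sq :=
    { carrier := {v : Z5sq | SemidirectProduct.inl (Multiplicative.ofAdd v) ∈ H}
      zero_mem' := by
        show SemidirectProduct.inl (Multiplicative.ofAdd (0 : Z5sq)) ∈ H
        simpa using H.one_mem
      add_mem' := by
        intro a b ha hb
        show SemidirectProduct.inl (Multiplicative.ofAdd (a + b)) ∈ H
        rw [ofAdd_add, map_mul]
        exact H.mul_mem ha hb
      neg_mem' := by
        intro a ha
        show SemidirectProduct.inl (Multiplicative.ofAdd (-a)) ∈ H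
        rw [ofAdd_neg, map_inv]
        exact H.inv_mem ha } with hK_def
  have hKe1 : e1 ∈ K := he1
  have hKe2 : e2 ∈ K := he2
  -- conjugation stability
  have hconj : ∀ v : Z5sq, v ∈ K →
      (Multiplicative.toAdd (φ t (Multiplicative.ofAdd v)) : Z5sq) ∈ K := by
    intro v hv
    show SemidirectProduct.inl
      (Multiplicative.ofAdd (Multiplicative.toAdd (φ t (Multiplicative.ofAdd v)))) ∈ H
    rw [ofAdd_toAdd, SemidirectProduct.inl_aut, map_inv]
    exact H.mul_mem (H.mul_mem ht hv) (H.inv_mem ht)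
  have hconjinv : ∀ v : Z5sq, v ∈ K →
      (Multiplicative.toAdd (φ t⁻¹ (Multiplicative.ofAdd v)) : Z5sq) ∈ K := by
    intro v hv
    show SemidirectProduct.inl
      (Multiplicative.ofAdd (Multiplicative.toAdd (φ t⁻¹ (Multiplicative.ofAdd v)))) ∈ H
    rw [ofAdd_toAdd, map_inv, SemidirectProduct.inl_aut_inv, map_inv]
    exact H.mul_mem (H.mul_mem (H.inv_mem ht) hv) ht
  -- formula for the inverse action
  have hφinv : ∀ v : Z5sq,
      ((Multiplicative.toAdd (φ t⁻¹ (Multiplicative.ofAdd v)) : Z5sq) : ℚ × ℚ) =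
      (3/5 * (v : ℚ × ℚ).1 - 4/5 * (v : ℚ × ℚ).2,
        4/5 * (v : ℚ × ℚ).1 + 3/5 * (v : ℚ × ℚ).2) := by
    intro v
    set w : Z5sq := (Multiplicative.toAdd (φ t⁻¹ (Multiplicative.ofAdd v)) : Z5sq) with hw
    have hcomp : φ t (Multiplicative.ofAdd w) = Multiplicative.ofAdd v := by
      rw [hw, ofAdd_toAdd, map_inv]
      exact MulAut.apply_inv_self _ (φ t) (Multiplicative.ofAdd v)
    have h := hφ w
    rw [hcomp, toAdd_ofAdd] at h
    have h1 := congrArg Prod.fst h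
    have h2 := congrArg Prod.snd h
    simp only at h1 h2
    refine Prod.ext ?_ ?_
    · simp only; linarith
    · simp only; linarith
  -- main induction
  have main : ∀ (n : ℕ) (a b : ℤ) (v : Z5sq),
      (v : ℚ × ℚ) = ((a : ℚ) / 5 ^ n, (b : ℚ) / 5 ^ n) → v ∈ K := by
    intro n
    induction n with
    | zero =>
      intro a b v hv
      have : v = a • e1 + b • e2 := by
        apply Subtype.ext
        push_cast
        rw [hv]
        simp [he1_def, he2_def, Prod.ext_iff]
      rw [this]
      exact K.add_mem (K.zsmul_mem hKe1 a) (K.zsmul_mem hKe2 b)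
    | succ n ih =>
      intro a b v hv
      set u : Z5sq := ⟨((a : ℚ) / 5 ^ n, (b : ℚ) / 5 ^ n), ⟨a, b, n, rfl, rfl⟩⟩ with hu_def
      have hu : u ∈ K := ih a b u rfl
      set w1 : Z5sq := (Multiplicative.toAdd (φ t (Multiplicative.ofAdd u)) : Z5sq) with hw1
      set w2 : Z5sq := (Multiplicative.toAdd (φ t⁻¹ (Multiplicative.ofAdd u)) : Z5sq) with hw2
      have hw1c : ((w1 : Z5sq) : ℚ × ℚ) =
          (3/5 * ((a:ℚ)/5^n) + 4/5 * ((b:ℚ)/5^n),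
            -(4/5) * ((a:ℚ)/5^n) + 3/5 * ((b:ℚ)/5^n)) := hφ u
      have hw2c : ((w2 : Z5sq) : ℚ × ℚ) =
          (3/5 * ((a:ℚ)/5^n) - 4/5 * ((b:ℚ)/5^n),
            4/5 * ((a:ℚ)/5^n) + 3/5 * ((b:ℚ)/5^n)) := hφinv u
      have hveq : v = w1 + w2 - u := by
        apply Subtype.ext
        push_cast
        rw [hv, hw1c, hw2c]
        have h5 : (5 : ℚ) ^ (n + 1) = 5 ^ n * 5 := pow_succ 5 n
        refine Prod.ext ?_ ?_ <;>
          · simp only [hu_def, Prod.fst_add, Prod.snd_add, Prod.fst_sub, Prod.snd_sub, h5]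
            have : (5 : ℚ) ^ n ≠ 0 := pow_ne_zero n (by norm_num)
            field_simp
            ring
      rw [hveq]
      exact K.sub_mem (K.add_mem (hconj u hu) (hconjinv u hu)) hu
  -- every `inl` element is in H
  have hinl : ∀ v : Z5sq, SemidirectProduct.inl (Multiplicative.ofAdd v) ∈ H := by
    intro v
    obtain ⟨a, b, n, h1, h2⟩ := v.2
    exact main n a b v (Prod.ext h1 h2)
  have hinr : ∀ g : Multiplicative ℤ, SemidirectProduct.inr g ∈ H := by
    intro g
    have : g = t ^ (Multiplicative.toAdd g) := by
      rw [ht_def, ← ofAdd_zsmul, smul_eq_mul, mul_one, ofAdd_toAdd]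
    rw [this, map_zpow]
    exact H.zpow_mem ht _
  have htop : H = ⊤ := by
    rw [eq_top_iff]
    intro x _
    rw [← SemidirectProduct.inl_left_mul_inr_right x]
    have hx : SemidirectProduct.inl x.left ∈ H := by
      have := hinl (Multiplicative.toAdd x.left)
      rwa [ofAdd_toAdd] at this
    exact H.mul_mem hx (hinr x.right)
  exact ⟨Group.fg_iff.mpr ⟨_, htop, Set.toFinite _⟩, htop⟩
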